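/- Let S be a sublinear monotone semigroup on a Banach lattice X. Then the symmetric Lipschitz set D_L^s := {x ∈ X : sup_{0<h≤h₀} ‖(S(h)x−x)/h‖ < ∞ and sup_{0<h≤h₀} ‖(S(h)(−x)+x)/h‖ < ∞ for some h₀ > 0} is a linear subspace of X. -/

import Mathlib

/-- Membership in the symmetric Lipschitz set `D_L^s` of a semigroup `S`. -/
def memDLs {X : Type*} [NormedAddCommGroup X] (S : ℝ → X → X) (x : X) : Prop :=
  ∃ h₀ > (0 : ℝ), ∃ C : ℝ, ∀ h : ℝ, 0 < h → h ≤ h₀ →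
    ‖S h x - x‖ ≤ C * h ∧ ‖S h (-x) + x‖ ≤ C * h

/-- Sandwich bound for the norm in a normed lattice. -/
lemma norm_le_of_between {X : Type*} [NormedAddCommGroup X] [Lattice X] [IsOrderedAddMonoid X]
    [HasSolidNorm X] {a z b : X}
    (ha : a ≤ z) (hb : z ≤ b) : ‖z‖ ≤ ‖a‖ + ‖b‖ := by
  have habs : |z| ≤ |a| + |b| := by
    refine abs_le'.mpr ⟨?_, ?_⟩
    · exact hb.trans ((le_abs_self b).trans (le_add_of_nonneg_left (abs_nonneg a)))
    · exact (neg_le_neg ha).trans ((neg_le_abs a).trans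
        (le_add_of_nonneg_right (abs_nonneg b)))
  have hn : (0:X) ≤ |a| + |b| := add_nonneg (abs_nonneg a) (abs_nonneg b)
  calc ‖z‖ = ‖|z|‖ := (norm_abs_eq_norm z).symm
    _ ≤ ‖|a| + |b|‖ := HasSolidNorm.solid (by rw [abs_abs, abs_of_nonneg hn]; exact habs)
    _ ≤ ‖|a|‖ + ‖|b|‖ := norm_add_le _ _
    _ = ‖a‖ + ‖b‖ := by rw [norm_abs_eq_norm, norm_abs_eq_norm]

/-- memDLs is symmetric under negation. -/
lemma memDLs_neg {X : Type*} [NormedAddCommGroup X] {S : ℝ → X → X} {x : X}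
    (hx : memDLs S x) : memDLs S (-x) := by
  obtain ⟨h₀, hh₀, C, hC⟩ := hx
  refine ⟨h₀, hh₀, C, fun h hh hle => ?_⟩
  obtain ⟨h1, h2⟩ := hC h hh hle
  constructor
  · simpa [sub_eq_add_neg] using h2
  · simpa [neg_neg, ← sub_eq_add_neg] using h1

theorem stmt14 {X : Type*} [NormedAddCommGroup X] [Lattice X] [IsOrderedAddMonoid X]
    [HasSolidNorm X] [NormedSpace ℝ X] [PosSMulStrictMono ℝ X]
    [CompleteSpace X] (S : ℝ → X → X)
    (h0 : ∀ x, S 0 x = x)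
    (hsg : ∀ s t : ℝ, 0 ≤ s → 0 ≤ t → ∀ x, S (s + t) x = S t (S s x))
    (hsub : ∀ t : ℝ, 0 ≤ t → ∀ x y : X, S t (x + y) ≤ S t x + S t y)
    (hhom : ∀ t : ℝ, 0 ≤ t → ∀ l : ℝ, 0 < l → ∀ x, S t (l • x) = l • S t x)
    (hmono : ∀ t : ℝ, 0 ≤ t → Monotone (S t)) :
    memDLs S 0 ∧
    (∀ x y : X, memDLs S x → memDLs S y → memDLs S (x + y)) ∧
    (∀ (x : X) (c : ℝ), memDLs S x → memDLs S (c • x)) := by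
  -- S t 0 = 0
  have hzero : ∀ t : ℝ, 0 ≤ t → S t 0 = 0 := by
    intro t ht
    have h2 : S t ((2:ℝ) • (0:X)) = (2:ℝ) • S t 0 := hhom t ht 2 two_pos 0
    rw [smul_zero] at h2
    have : ((2:ℝ) - 1) • S t 0 = 0 := by rw [sub_smul, one_smul, ← h2, sub_self]
    simpa using (smul_eq_zero.mp this).resolve_left (by norm_num)
  have hDL0 : memDLs S 0 := by
    refine ⟨1, one_pos, 0, fun h hh hle => ?_⟩
    simp [hzero h hh.le]
  -- key one-sided bound for sums
  have key : ∀ x y : X, ∀ h : ℝ, 0 < h → ∀ Cx Cy : ℝ,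
      ‖S h x - x‖ ≤ Cx * h → ‖S h (-y) + y‖ ≤ Cy * h → ‖S h y - y‖ ≤ Cy * h →
      ‖S h (x + y) - (x + y)‖ ≤ (2 * (Cx + Cy)) * h := by
    intro x y h hh Cx Cy hx1 hy2 hy1
    have hupper : S h (x + y) - (x + y) ≤ (S h x - x) + (S h y - y) := by
      have := hsub h hh.le x y
      have : S h (x + y) - (x + y) ≤ (S h x + S h y) - (x + y) := by
        exact sub_le_sub_right this _
      calc S h (x + y) - (x + y) ≤ (S h x + S h y) - (x + y) := this
        _ = (S h x - x) + (S h y - y) := by abel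
    have hlower : (S h x - x) - (S h (-y) + y) ≤ S h (x + y) - (x + y) := by
      have hx' : S h x ≤ S h (x + y) + S h (-y) := by
        have := hsub h hh.le (x + y) (-y)
        simpa using this
      have : S h x - S h (-y) ≤ S h (x + y) := by
        exact sub_le_iff_le_add.mpr hx'
      calc (S h x - x) - (S h (-y) + y) = (S h x - S h (-y)) - (x + y) := by abel
        _ ≤ S h (x + y) - (x + y) := sub_le_sub_right this _
    have hnorm := norm_le_of_between hlower hupper
    have ha : ‖(S h x - x) - (S h (-y) + y)‖ ≤ Cx * h + Cy * h :=
      (norm_sub_le _ _).trans (add_le_add hx1 hy2)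
    have hb : ‖(S h x - x) + (S h y - y)‖ ≤ Cx * h + Cy * h :=
      (norm_add_le _ _).trans (add_le_add hx1 hy1)
    calc ‖S h (x + y) - (x + y)‖ ≤ _ := hnorm
      _ ≤ (Cx * h + Cy * h) + (Cx * h + Cy * h) := add_le_add ha hb
      _ = (2 * (Cx + Cy)) * h := by ring
  have hadd : ∀ x y : X, memDLs S x → memDLs S y → memDLs S (x + y) := by
    intro x y hx hy
    obtain ⟨hx₀, hhx₀, Cx, hCx⟩ := hx
    obtain ⟨hy₀, hhy₀, Cy, hCy⟩ := hy
    refine ⟨min hx₀ hy₀, lt_min hhx₀ hhy₀, 2 * (Cx + Cy), fun h hh hle => ?_⟩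
    obtain ⟨hx1, hx2⟩ := hCx h hh (hle.trans (min_le_left _ _))
    obtain ⟨hy1, hy2⟩ := hCy h hh (hle.trans (min_le_right _ _))
    constructor
    · exact key x y h hh Cx Cy hx1 hy2 hy1
    · have := key (-x) (-y) h hh Cx Cy (by simpa [sub_eq_add_neg] using hx2)
        (by simpa [neg_neg, ← sub_eq_add_neg] using hy1)
        (by simpa [sub_eq_add_neg] using hy2)
      have heq : S h (-(x+y)) + (x+y) = S h ((-x) + (-y)) - ((-x) + (-y)) := by
        rw [neg_add]; abel_nf
      rw [heq]
      exact this
  refine ⟨hDL0, hadd, ?_⟩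
  -- scalar multiplication, first positive case
  have hpos : ∀ (x : X) (c : ℝ), 0 < c → memDLs S x → memDLs S (c • x) := by
    intro x c hc hx
    obtain ⟨h₀, hh₀, C, hC⟩ := hx
    refine ⟨h₀, hh₀, c * C, fun h hh hle => ?_⟩
    obtain ⟨h1, h2⟩ := hC h hh hle
    constructor
    · rw [hhom h hh.le c hc x, ← smul_sub, norm_smul, Real.norm_eq_abs, abs_of_pos hc,
        mul_assoc]
      exact mul_le_mul_of_nonneg_left h1 hc.le
    · have : -(c • x) = c • (-x) := (smul_neg c x).symm
      rw [this, hhom h hh.le c hc (-x), ← smul_add, norm_smul, Real.norm_eq_abs,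
        abs_of_pos hc, mul_assoc]
      exact mul_le_mul_of_nonneg_left h2 hc.le
  intro x c hx
  rcases lt_trichotomy c 0 with hc | hc | hc
  · have : c • x = (-c) • (-x) := by rw [neg_smul, smul_neg, neg_neg]
    rw [this]
    exact hpos (-x) (-c) (neg_pos.mpr hc) (memDLs_neg hx)
  · rw [hc, zero_smul]; exact hDL0
  · exact hpos x c hc hx
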